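/- Pointwise coercivity under the eigenvalue assumption (core of Lemma 5.1, curl case): Let β : ℝ³ → ℝ³ be differentiable at x ∈ ℝ³, let γ ∈ ℝ and ρ₀ > 0, and assume that the smallest eigenvalue of the real symmetric matrix γ I + ½(Dβ(x) + Dβ(x)ᵀ) − ½ (div β)(x) I is at least ρ₀. Then for every u : ℝ³ → ℝ³ differentiable at x, γ |u(x)|² + ½ u(x) · [(L^{curl}_β u)(x) + ((L^{curl}_β)^* u)(x)] ≥ ρ₀ |u(x)|². -/

import Mathlib

open Finset

noncomputable section

/-- Points of `ℝ³`. -/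
abbrev V3 := Fin 3 → ℝ

/-- Euclidean dot product on `ℝ³`. -/
def dot3 (a b : V3) : ℝ := ∑ i, a i * b i

/-- Cross product on `ℝ³`. -/
def cross3 (a b : V3) : V3 :=
  ![a 1 * b 2 - a 2 * b 1, a 2 * b 0 - a 0 * b 2, a 0 * b 1 - a 1 * b 0]

/-- The `j`-th standard basis vector of `ℝ³`. -/
def e3 (j : Fin 3) : V3 := Pi.single j 1

/-- Partial derivative `∂ⱼ wᵢ (x)` of a vector field `w : ℝ³ → ℝ³`. -/
def pd (w : V3 → V3) (x : V3) (i j : Fin 3) : ℝ := fderiv ℝ w x (e3 j) i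

/-- Divergence `div w = ∂₁w₁ + ∂₂w₂ + ∂₃w₃` of a vector field at a point. -/
def divg (w : V3 → V3) (x : V3) : ℝ := ∑ i, pd w x i i

/-- Curl `(∂₂w₃ − ∂₃w₂, ∂₃w₁ − ∂₁w₃, ∂₁w₂ − ∂₂w₁)` of a vector field at a point
(0-based indices). -/
def curl3 (w : V3 → V3) (x : V3) : V3 :=
  ![pd w x 2 1 - pd w x 1 2, pd w x 0 2 - pd w x 2 0, pd w x 1 0 - pd w x 0 1]

/-- Gradient `∇f = (∂₁f, ∂₂f, ∂₃f)` of a scalar function at a point. -/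
def grad3 (f : V3 → ℝ) (x : V3) : V3 := fun j => fderiv ℝ f x (e3 j)

/-- Jacobian matrix `Dw(x)` with entries `(Dw)ᵢⱼ = ∂ⱼwᵢ`. -/
def jac (w : V3 → V3) (x : V3) : Matrix (Fin 3) (Fin 3) ℝ :=
  Matrix.of fun i j => pd w x i j

/-- The `H(curl)` advection operator `L^curl_β u = ∇(β·u) + (curl u) × β`. -/
def Lcurl (β u : V3 → V3) (x : V3) : V3 :=
  grad3 (fun y => dot3 (β y) (u y)) x + cross3 (curl3 u x) (β x)

/-- Formal adjoint `(L^curl_β)^* u = −β (div u) + curl(β × u)`. -/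
def LcurlAdj (β u : V3 → V3) (x : V3) : V3 :=
  -(divg u x • β x) + curl3 (fun y => cross3 (β y) (u y)) x

/-- The `H(div)` advection operator `L^div_β u = β (div u) − curl(β × u)`. -/
def Ldiv (β u : V3 → V3) (x : V3) : V3 :=
  divg u x • β x - curl3 (fun y => cross3 (β y) (u y)) x

/-- Formal adjoint `(L^div_β)^* u = −∇(β·u) − (curl u) × β`. -/
def LdivAdj (β u : V3 → V3) (x : V3) : V3 :=
  -grad3 (fun y => dot3 (β y) (u y)) x - cross3 (curl3 u x) (β x)

end

noncomputable section

/-- The symmetric matrix `γ I + ½(Dβ(x) + Dβ(x)ᵀ) − ½ (div β)(x) I`. -/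
def coercivityMatrix (β : V3 → V3) (x : V3) (γ : ℝ) : Matrix (Fin 3) (Fin 3) ℝ :=
  γ • (1 : Matrix (Fin 3) (Fin 3) ℝ) +
    (1 / 2 : ℝ) • (jac β x + (jac β x).transpose) -
    ((divg β x) / 2) • (1 : Matrix (Fin 3) (Fin 3) ℝ)

end


section Aux
open Matrix

private lemma quadform_lower (M : Matrix (Fin 3) (Fin 3) ℝ) (hM : M.IsHermitian) (ρ₀ : ℝ)
    (heig : ∀ i, ρ₀ ≤ hM.eigenvalues i) (v : Fin 3 → ℝ) :
    ρ₀ * ∑ i, v i ^ 2 ≤ v ⬝ᵥ (M *ᵥ v) := by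
  set U : Matrix (Fin 3) (Fin 3) ℝ := (hM.eigenvectorUnitary : Matrix (Fin 3) (Fin 3) ℝ)
  have hUU : U * Uᴴ = 1 := (Matrix.mem_unitaryGroup_iff).mp hM.eigenvectorUnitary.2
  have hst := hM.spectral_theorem
  rw [Unitary.conjStarAlgAut_apply, Matrix.star_eq_conjTranspose] at hst
  have key : M - ρ₀ • 1 = U * diagonal (fun i => hM.eigenvalues i - ρ₀) * Uᴴ := by
    have hd : diagonal (fun i => hM.eigenvalues i - ρ₀)
        = diagonal (RCLike.ofReal ∘ hM.eigenvalues) - ρ₀ • 1 := by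
      simp [Matrix.diagonal_sub, Matrix.smul_one_eq_diagonal, sub_eq_add_neg]
    rw [hd, Matrix.mul_sub, Matrix.sub_mul, ← hst]
    congr 1
    rw [Matrix.mul_smul, Matrix.smul_mul, mul_one, hUU]
  have hps : (M - ρ₀ • 1).PosSemidef := by
    rw [key]
    exact (posSemidef_diagonal_iff.mpr fun i =>
      sub_nonneg.mpr (heig i)).mul_mul_conjTranspose_same U
  have h2 := hps.dotProduct_mulVec_nonneg v
  simp only [star_trivial, Matrix.sub_mulVec, dotProduct_sub, Matrix.smul_mulVec,
    Matrix.one_mulVec, dotProduct_smul, sub_nonneg, smul_eq_mul] at h2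
  calc ρ₀ * ∑ i, v i ^ 2 = ρ₀ * (v ⬝ᵥ v) := by simp [dotProduct, sq]
    _ ≤ _ := h2

private lemma pd_eq (x : V3) (w : V3 → V3) (hw : DifferentiableAt ℝ w x) (i j : Fin 3) :
    pd w x i j = fderiv ℝ (fun y => w y i) x (e3 j) := by
  rw [pd, fderiv_pi (differentiableAt_pi.mp hw)]
  rfl

private lemma fd_mul (β u : V3 → V3) (x : V3)
    (hβ : DifferentiableAt ℝ β x) (hu : DifferentiableAt ℝ u x) (a b j : Fin 3) :
    fderiv ℝ (fun y => β y a * u y b) x (e3 j) =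
      β x a * pd u x b j + pd β x a j * u x b := by
  rw [fderiv_fun_mul (differentiableAt_pi.mp hβ a) (differentiableAt_pi.mp hu b)]
  rw [pd_eq x u hu, pd_eq x β hβ]
  simp [mul_comm]

private lemma diff_cross (β u : V3 → V3) (x : V3)
    (hβ : DifferentiableAt ℝ β x) (hu : DifferentiableAt ℝ u x) :
    DifferentiableAt ℝ (fun y => cross3 (β y) (u y)) x := by
  have hb := differentiableAt_pi.mp hβ
  have hc := differentiableAt_pi.mp hu
  apply differentiableAt_pi.mpr
  intro i
  fin_cases i <;>
    simp only [cross3, Matrix.cons_val_zero, Matrix.cons_val_one, Matrix.head_cons,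
      Matrix.cons_val_two, Matrix.tail_cons, Fin.isValue, Fin.zero_eta, Fin.mk_one,
      Fin.reduceFinMk] <;>
    exact ((hb _).mul (hc _)).sub ((hb _).mul (hc _))

private lemma pd_cross (β u : V3 → V3) (x : V3)
    (hβ : DifferentiableAt ℝ β x) (hu : DifferentiableAt ℝ u x) (i j : Fin 3) :
    pd (fun y => cross3 (β y) (u y)) x i j =
      cross3 (fun k => pd β x k j) (u x) i + cross3 (β x) (fun k => pd u x k j) i := by
  have hb := differentiableAt_pi.mp hβ
  have hc := differentiableAt_pi.mp hu
  rw [pd_eq x _ (diff_cross β u x hβ hu)]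
  fin_cases i <;>
    simp only [cross3, Matrix.cons_val_zero, Matrix.cons_val_one, Matrix.head_cons,
      Matrix.cons_val_two, Matrix.tail_cons, Fin.isValue, Fin.zero_eta, Fin.mk_one,
      Fin.reduceFinMk] <;>
    rw [fderiv_fun_sub ((hb _).fun_mul (hc _)) ((hb _).fun_mul (hc _))] <;>
    simp only [ContinuousLinearMap.sub_apply, fd_mul β u x hβ hu] <;> ring

private lemma grad_dot (β u : V3 → V3) (x : V3)
    (hβ : DifferentiableAt ℝ β x) (hu : DifferentiableAt ℝ u x) (j : Fin 3) :
    fderiv ℝ (fun y => dot3 (β y) (u y)) x (e3 j) =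
      ∑ k, (β x k * pd u x k j + pd β x k j * u x k) := by
  have hb := differentiableAt_pi.mp hβ
  have hc := differentiableAt_pi.mp hu
  simp only [dot3, Fin.sum_univ_three]
  rw [fderiv_fun_add (((hb _).fun_mul (hc _)).fun_add ((hb _).fun_mul (hc _))) ((hb _).fun_mul (hc _)),
    fderiv_fun_add ((hb _).fun_mul (hc _)) ((hb _).fun_mul (hc _))]
  simp only [ContinuousLinearMap.add_apply, fd_mul β u x hβ hu]

end Aux


set_option maxHeartbeats 2000000 in
/-- **Pointwise coercivity under the eigenvalue assumption** (core of Lemma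
5.1, curl case): if the smallest eigenvalue of the real symmetric matrix
`γ I + ½(Dβ(x) + Dβ(x)ᵀ) − ½ (div β)(x) I` is at least `ρ₀ > 0`, then for every
`u` differentiable at `x`,
`γ |u(x)|² + ½ u(x)·[(L^curl_β u)(x) + ((L^curl_β)^* u)(x)] ≥ ρ₀ |u(x)|²`. -/
theorem pointwise_coercivity_curl
    (β : V3 → V3) (x : V3) (γ ρ₀ : ℝ) (hρ : 0 < ρ₀)
    (hβ : DifferentiableAt ℝ β x)
    (hM : (coercivityMatrix β x γ).IsHermitian)
    (heig : ∀ i, ρ₀ ≤ hM.eigenvalues i)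
    (u : V3 → V3) (hu : DifferentiableAt ℝ u x) :
    ρ₀ * ∑ i, (u x i) ^ 2 ≤
      γ * ∑ i, (u x i) ^ 2 +
        (1 / 2) * dot3 (u x) (Lcurl β u x + LcurlAdj β u x) := by
  have hg := grad_dot β u x hβ hu
  have hpc := pd_cross β u x hβ hu
  have hGvec : grad3 (fun y => dot3 (β y) (u y)) x
      = fun j => ∑ k, (β x k * pd u x k j + pd β x k j * u x k) := by
    funext j
    simp only [grad3]
    exact hg j
  set f : Fin 3 → Fin 3 → ℝ := fun i j =>
    cross3 (fun k => pd β x k j) (u x) i + cross3 (β x) (fun k => pd u x k j) i with hf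
  have hpc' : ∀ i j, pd (fun y => cross3 (β y) (u y)) x i j = f i j := fun i j => hpc i j
  have hC : curl3 (fun y => cross3 (β y) (u y)) x
      = ![f 2 1 - f 1 2, f 0 2 - f 2 0, f 1 0 - f 0 1] := by
    simp only [curl3, hpc']
  have key : dot3 (u x) (Lcurl β u x + LcurlAdj β u x) =
      (∑ i, ∑ j, u x i * (pd β x i j + pd β x j i) * u x j)
        - divg β x * ∑ i, (u x i) ^ 2 := by
    simp only [Lcurl, LcurlAdj]
    rw [hGvec, hC]
    simp only [hf, dot3, divg, curl3, cross3, Fin.sum_univ_three, Pi.add_apply, Pi.neg_apply,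
      Pi.smul_apply, Pi.sub_apply, smul_eq_mul, Matrix.cons_val_zero, Matrix.cons_val_one,
      Matrix.head_cons, Matrix.cons_val_two, Matrix.tail_cons, Fin.isValue]
    ring
  have hq := quadform_lower _ hM ρ₀ heig (u x)
  have hqe : dotProduct (u x) (Matrix.mulVec (coercivityMatrix β x γ) (u x)) =
      γ * ∑ i, (u x i) ^ 2 + (1 / 2) * dot3 (u x) (Lcurl β u x + LcurlAdj β u x) := by
    rw [key]
    simp only [coercivityMatrix, jac, divg, dotProduct, Matrix.mulVec,
      Fin.sum_univ_three, Matrix.sub_apply, Matrix.add_apply, Matrix.smul_apply,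
      Matrix.transpose_apply, Matrix.one_apply, Matrix.of_apply, smul_eq_mul,
      Fin.isValue, Fin.reduceEq, reduceIte, if_true, if_false]
    ring
  linarith
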